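/- For every Δ, m ∈ Z_{≥1}, there exists an integer matrix A with m rows, rank m, with pairwise differing nonzero columns, such that every m×m minor of A has absolute value at most Δ, and A has at least (m² + m)/2 + m(Δ − 1) columns. -/

import Mathlib

/-- `A` has differing columns: no column is zero and no two columns are equal
or negatives of each other. -/
def DiffCols {m n : ℕ} (A : Matrix (Fin m) (Fin n) ℤ) : Prop :=
  (∀ j, (fun i => A i j) ≠ 0) ∧
  ∀ j j' : Fin n, j ≠ j' →
    (fun i => A i j) ≠ (fun i => A i j') ∧ (fun i => A i j) ≠ (fun i => -A i j')

/-- `A` is `Δ`-modular: every `m × m` minor has absolute value at most `Δ`. -/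
def DMod {m n : ℕ} (A : Matrix (Fin m) (Fin n) ℤ) (Δ : ℤ) : Prop :=
  ∀ g : Fin m → Fin n, |(A.submatrix id g).det| ≤ Δ


/-- Columns of a "network-type" matrix: zero, `±e_t`, or `e_t - e_s`. -/
def SCol {k : ℕ} (v : Fin k → ℤ) : Prop :=
  v = 0 ∨
  (∃ t : Fin k, ∃ ε : ℤ, (ε = 1 ∨ ε = -1) ∧ v = fun i => if i = t then ε else 0) ∨
  (∃ t s : Fin k, t ≠ s ∧ v = fun i => (if i = t then 1 else 0) - (if i = s then 1 else 0))

lemma scol_restrict {k : ℕ} (p : Fin (k + 1)) (v : Fin (k + 1) → ℤ) (h : SCol v) :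
    SCol (fun i => v (p.succAbove i)) := by
  have hinj : Function.Injective p.succAbove := Fin.succAbove_right_injective
  rcases h with h | ⟨t, ε, hε, h⟩ | ⟨t, s, hts, h⟩
  · left; funext i; simp [h]
  · subst h
    by_cases ht : t = p
    · left; funext i; simp [Fin.succAbove_ne p i, ht]
    · obtain ⟨t', ht'⟩ := Fin.exists_succAbove_eq ht
      right; left
      exact ⟨t', ε, hε, by funext i; simp [← ht', hinj.eq_iff]⟩
  · subst h
    by_cases ht : t = p
    · subst ht
      have hs : s ≠ t := fun h => hts h.symm
      obtain ⟨s', hs'⟩ := Fin.exists_succAbove_eq hs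
      right; left
      refine ⟨s', -1, Or.inr rfl, ?_⟩
      funext i
      simp [Fin.succAbove_ne t i, ← hs', hinj.eq_iff]
      split <;> simp
    · obtain ⟨t', ht'⟩ := Fin.exists_succAbove_eq ht
      by_cases hsp : s = p
      · subst hsp
        right; left
        refine ⟨t', 1, Or.inl rfl, ?_⟩
        funext i
        simp [Fin.succAbove_ne s i, ← ht', hinj.eq_iff]
      · obtain ⟨s', hs'⟩ := Fin.exists_succAbove_eq hsp
        right; right
        refine ⟨t', s', ?_, ?_⟩
        · rintro rfl; exact hts (ht'.symm.trans hs')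
        · funext i; simp [← ht', ← hs', hinj.eq_iff]

lemma scol_det : ∀ (k : ℕ) (M : Matrix (Fin k) (Fin k) ℤ),
    (∀ j, SCol (fun i => M i j)) → |M.det| ≤ 1 := by
  intro k
  induction k with
  | zero => intro M _; simp [Matrix.det_isEmpty]
  | succ k ih =>
    intro M h
    by_cases hz : ∃ j, (fun i => M i j) = (0 : Fin (k + 1) → ℤ)
    · obtain ⟨j, hj⟩ := hz
      rw [Matrix.det_eq_zero_of_column_eq_zero j (fun i => congrFun hj i)]
      simp
    · by_cases he : ∃ j t, ∃ ε : ℤ, (ε = 1 ∨ ε = -1) ∧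
          (fun i => M i j) = fun i => if i = t then ε else 0
      · obtain ⟨j, t, ε, hε, hv⟩ := he
        have hMij : ∀ i, M i j = if i = t then ε else 0 := fun i => congrFun hv i
        rw [Matrix.det_succ_column M j, Finset.sum_eq_single t]
        · rw [abs_mul, abs_mul]
          have h1 : |(-1 : ℤ) ^ ((t : ℕ) + (j : ℕ))| = 1 := by
            rw [abs_pow, abs_neg, abs_one, one_pow]
          have h2 : |M t j| = 1 := by
            rw [hMij t]; simp; rcases hε with rfl | rfl <;> simp
          rw [h1, h2, one_mul, one_mul]
          apply ih
          intro j''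
          exact scol_restrict t _ (h (j.succAbove j''))
        · intro b _ hb
          rw [hMij b, if_neg hb, mul_zero, zero_mul]
        · intro h'; exact absurd (Finset.mem_univ t) h'
      · -- all columns are difference type; column sums vanish
        have hd : ∀ j, ∃ t s : Fin (k+1), t ≠ s ∧
            (fun i => M i j) = fun i => (if i = t then 1 else 0) - (if i = s then 1 else 0) := by
          intro j
          rcases h j with h' | ⟨t, ε, hε, h'⟩ | h'
          · exact absurd ⟨j, h'⟩ hz
          · exact absurd ⟨j, t, ε, hε, h'⟩ he
          · exact h'
        have hsum : Matrix.vecMul (fun _ => (1 : ℤ)) M = 0 := by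
          funext j
          obtain ⟨t, s, hts, hv⟩ := hd j
          have hMij : ∀ i, M i j = (if i = t then 1 else 0) - (if i = s then 1 else 0) :=
            fun i => congrFun hv i
          simp only [Matrix.vecMul, dotProduct, one_mul, Pi.zero_apply]
          simp only [hMij]
          rw [Finset.sum_sub_distrib]
          simp [Finset.sum_ite_eq']
        have key := congrArg (Matrix.vecMul (fun _ => (1 : ℤ))) (Matrix.mul_adjugate M)
        rw [← Matrix.vecMul_vecMul, hsum, Matrix.zero_vecMul] at key
        have h0 := congrFun key 0
        simp only [Matrix.vecMul, dotProduct, Matrix.smul_apply, Matrix.one_apply,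
          smul_eq_mul, one_mul, mul_ite, mul_one, mul_zero, Pi.zero_apply,
          Finset.sum_ite_eq', Finset.mem_univ, if_true] at h0
        rw [← h0]
        simp

/-- Column classes for the main construction: `Z`-type `a·e₀`, `E`-type `±(b·e₀ + e_t)`,
`D`-type `e_t - e_s` with `t, s ≠ 0`. -/
def MCol (Δ : ℤ) {k : ℕ} (v : Fin (k + 1) → ℤ) : Prop :=
  (∃ a : ℤ, a ≠ 0 ∧ |a| ≤ Δ ∧ v = fun i => if i = 0 then a else 0) ∨
  (∃ b ε : ℤ, ∃ t : Fin (k + 1), t ≠ 0 ∧ (ε = 1 ∨ ε = -1) ∧ -1 ≤ ε * b ∧ ε * b ≤ Δ - 1 ∧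
    v = fun i => (if i = 0 then b else 0) + (if i = t then ε else 0)) ∨
  (∃ t s : Fin (k + 1), t ≠ 0 ∧ s ≠ 0 ∧ t ≠ s ∧
    v = fun i => (if i = t then 1 else 0) - (if i = s then 1 else 0))

lemma succAbove_zero_of_ne {k : ℕ} (p : Fin (k + 1 + 1)) (hp : p ≠ 0) :
    p.succAbove 0 = 0 := by
  simp [Fin.succAbove]
  exact if_pos (Fin.pos_iff_ne_zero.mpr hp)

lemma succAbove_eq_zero_iff {k : ℕ} (p : Fin (k + 1 + 1)) (hp : p ≠ 0) (i : Fin (k + 1)) :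
    p.succAbove i = 0 ↔ i = 0 := by
  constructor
  · intro h
    have := succAbove_zero_of_ne p hp
    exact Fin.succAbove_right_injective (h.trans this.symm)
  · rintro rfl; exact succAbove_zero_of_ne p hp

lemma mcol_restrict_zero {Δ : ℤ} {k : ℕ} (v : Fin (k + 1 + 1) → ℤ) (h : MCol Δ v) :
    SCol (fun i => v ((0 : Fin (k + 1 + 1)).succAbove i)) := by
  have hne : ∀ i : Fin (k + 1), (0 : Fin (k + 1 + 1)).succAbove i ≠ 0 := fun i =>
    Fin.succAbove_ne 0 i
  have hinj : Function.Injective (0 : Fin (k + 1 + 1)).succAbove :=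
    Fin.succAbove_right_injective
  rcases h with ⟨a, _, _, hv⟩ | ⟨b, ε, t, ht, hε, _, _, hv⟩ | ⟨t, s, ht, hs, hts, hv⟩ <;> subst hv
  · left; funext i; simp [hne i, Fin.succ_ne_zero]
  · obtain ⟨t', ht'⟩ := Fin.exists_succAbove_eq ht
    right; left
    exact ⟨t', ε, hε, by funext i; simp [hne i, ← ht', hinj.eq_iff, Fin.succ_ne_zero]⟩
  · obtain ⟨t', ht'⟩ := Fin.exists_succAbove_eq ht
    obtain ⟨s', hs'⟩ := Fin.exists_succAbove_eq hs
    right; right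
    refine ⟨t', s', ?_, ?_⟩
    · rintro rfl; exact hts (ht'.symm.trans hs')
    · funext i; simp [← ht', ← hs', hinj.eq_iff]

theorem mcol_det (Δ : ℤ) (hΔ : 1 ≤ Δ) : ∀ (k : ℕ) (M : Matrix (Fin (k + 1)) (Fin (k + 1)) ℤ),
    (∀ j, MCol Δ (fun i => M i j)) → |M.det| ≤ Δ := by
  intro k
  induction k with
  | zero =>
    intro M h
    rcases h 0 with ⟨a, _, haΔ, hv⟩ | ⟨b, ε, t, ht, _⟩ | ⟨t, s, ht, _⟩
    · rw [Matrix.det_fin_one]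
      have := congrFun hv 0
      simp only [if_pos rfl] at this
      rw [this]; exact haΔ
    · exact absurd (Fin.ext (by omega)) ht
    · exact absurd (Fin.ext (by omega)) ht
  | succ k ih =>
    intro M h
    by_cases hZ : ∃ j, ∃ a : ℤ, a ≠ 0 ∧ |a| ≤ Δ ∧
        (fun i => M i j) = fun i => if i = 0 then a else 0
    · -- expand along the Z column
      obtain ⟨j, a, ha0, haΔ, hv⟩ := hZ
      have hMij : ∀ i, M i j = if i = 0 then a else 0 := fun i => congrFun hv i
      rw [Matrix.det_succ_column M j, Finset.sum_eq_single (0 : Fin (k + 2))]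
      · rw [abs_mul, abs_mul, abs_pow, abs_neg, abs_one, one_pow, one_mul, hMij 0, if_pos rfl]
        calc |a| * |(M.submatrix (0 : Fin (k+2)).succAbove j.succAbove).det| ≤ |a| * 1 := by
              apply mul_le_mul_of_nonneg_left _ (abs_nonneg a)
              apply scol_det
              intro j''
              exact mcol_restrict_zero _ (h (j.succAbove j''))
          _ ≤ Δ := by rw [mul_one]; exact haΔ
      · intro b _ hb
        rw [hMij b, if_neg hb, mul_zero, zero_mul]
      · intro h'; exact absurd (Finset.mem_univ _) h'
    · by_cases hE : ∃ j, ∃ b ε : ℤ, ∃ t : Fin (k + 2), t ≠ 0 ∧ (ε = 1 ∨ ε = -1) ∧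
          -1 ≤ ε * b ∧ ε * b ≤ Δ - 1 ∧
          (fun i => M i j) = fun i => (if i = 0 then b else 0) + (if i = t then ε else 0)
      · obtain ⟨j1, b, ε, t1, ht1, hε, hb1, hb2, hv⟩ := hE
        have hcol : ∀ i, M i j1 = (if i = 0 then b else 0) + (if i = t1 then ε else 0) :=
          fun i => congrFun hv i
        have hε2 : ε * ε = 1 := by rcases hε with rfl | rfl <;> ring
        have hMt1j1 : M t1 j1 = ε := by rw [hcol t1, if_neg ht1, if_pos rfl, zero_add]
        set lam : Fin (k + 2) → ℤ := fun j => ε * M t1 j with hlam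
        -- column operations preserve the determinant
        have hop : ∀ S : Finset (Fin (k + 2)), j1 ∉ S →
            Matrix.det (Matrix.of fun i j => if j ∈ S then M i j - lam j * M i j1 else M i j)
              = M.det := by
          intro S
          induction S using Finset.induction_on with
          | empty =>
            intro _
            have he0 : (Matrix.of fun i j =>
                if j ∈ (∅ : Finset (Fin (k + 2))) then M i j - lam j * M i j1 else M i j) = M := by
              ext i j; simp
            rw [he0]
          | @insert a S ha ihS =>
            intro hj1
            have hj1a : j1 ≠ a := fun h' => hj1 (h' ▸ Finset.mem_insert_self a S)
            have hj1S : j1 ∉ S := fun h' => hj1 (Finset.mem_insert_of_mem h')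
            have heq : (Matrix.of fun i j => if j ∈ insert a S then M i j - lam j * M i j1
                  else M i j) =
                Matrix.updateCol
                  (Matrix.of fun i j => if j ∈ S then M i j - lam j * M i j1 else M i j) a
                  (fun i => (Matrix.of fun i j => if j ∈ S then M i j - lam j * M i j1
                    else M i j) i a +
                    (-(lam a)) • (Matrix.of fun i j => if j ∈ S then M i j - lam j * M i j1
                    else M i j) i j1) := by
              ext i j
              rw [Matrix.updateCol_apply]
              by_cases hja : j = a
              · subst hja
                simp [Finset.mem_insert, ha, hj1S, smul_eq_mul]
                ring
              · simp [Matrix.of_apply, Finset.mem_insert, hja]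
            rw [heq, Matrix.det_updateCol_add_smul_self _ (Ne.symm hj1a) _, ihS hj1S]
        have hdet : Matrix.det (Matrix.of fun i j =>
            if j ∈ Finset.univ.erase j1 then M i j - lam j * M i j1 else M i j) = M.det :=
          hop _ (Finset.notMem_erase j1 _)
        set M' : Matrix (Fin (k + 2)) (Fin (k + 2)) ℤ := Matrix.of fun i j =>
          if j ∈ Finset.univ.erase j1 then M i j - lam j * M i j1 else M i j with hM'
        have hM'app : ∀ i j, j ≠ j1 → M' i j = M i j - lam j * M i j1 := by
          intro i j hj
          simp [hM', Finset.mem_erase, hj]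
        have hM'j1 : ∀ i, M' i j1 = M i j1 := by
          intro i; simp [hM', Finset.mem_erase]
        -- row t1 of M' is ε·e_{j1}
        have hrow : ∀ j, j ≠ j1 → M' t1 j = 0 := by
          intro j hj
          rw [hM'app t1 j hj, hlam, hMt1j1]
          rcases hε with rfl | rfl <;> ring
        rw [← hdet, Matrix.det_succ_row M' t1, Finset.sum_eq_single j1]
        · rw [abs_mul, abs_mul, abs_pow, abs_neg, abs_one, one_pow, one_mul, hM'j1 t1, hMt1j1]
          have habsε : |ε| = 1 := by rcases hε with rfl | rfl <;> simp
          rw [habsε, one_mul]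
          -- classify columns of the minor
          have hclass : ∀ j'' : Fin (k + 1),
              MCol Δ (fun i => M' (t1.succAbove i) (j1.succAbove j'')) ∨
              (fun i => M' (t1.succAbove i) (j1.succAbove j'')) = 0 := by
            intro j''
            set j := j1.succAbove j'' with hj
            have hjj1 : j ≠ j1 := Fin.succAbove_ne j1 j''
            have hxne : ∀ i : Fin (k + 1), t1.succAbove i ≠ t1 := fun i => Fin.succAbove_ne t1 i
            have hinj : Function.Injective t1.succAbove := Fin.succAbove_right_injective
            have hx0 : ∀ i : Fin (k + 1), t1.succAbove i = 0 ↔ i = 0 :=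
              succAbove_eq_zero_iff t1 ht1
            have hMx : ∀ i, M' (t1.succAbove i) j =
                M (t1.succAbove i) j - lam j * M (t1.succAbove i) j1 :=
              fun i => hM'app _ j hjj1
            rcases h j with ⟨a, ha0, haΔ, hv'⟩ | ⟨b', ε', t', ht', hε', hb1', hb2', hv'⟩ |
              ⟨t, s, ht, hs, hts, hv'⟩
            · -- Z column: untouched
              have hMij : ∀ i, M i j = if i = 0 then a else 0 := fun i => congrFun hv' i
              have hlamj : lam j = 0 := by rw [hlam]; simp [hMij t1, ht1]
              left; left
              refine ⟨a, ha0, haΔ, ?_⟩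
              funext i
              rw [hMx i, hlamj, zero_mul, sub_zero, hMij]
              by_cases hi : i = 0
              · subst hi; rw [if_pos ((hx0 0).mpr rfl), if_pos rfl]
              · rw [if_neg (fun h' => hi ((hx0 i).mp h')), if_neg hi]
            · have hMij : ∀ i, M i j = (if i = 0 then b' else 0) + (if i = t' then ε' else 0) :=
                fun i => congrFun hv' i
              by_cases htt : t' = t1
              · -- becomes a Z column or zero
                rw [htt] at hMij
                have hlamj : lam j = ε * ε' := by
                  show ε * M t1 j = ε * ε'
                  rw [hMij t1, if_neg ht1, if_pos rfl, zero_add]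
                have hval : ∀ i : Fin (k + 1), M' (t1.succAbove i) j =
                    if i = 0 then b' - ε * ε' * b else 0 := by
                  intro i
                  rw [hMx i, hlamj, hMij, hcol]
                  rw [if_neg (hxne i), if_neg (hxne i)]
                  by_cases hi : i = 0
                  · subst hi; rw [if_pos ((hx0 0).mpr rfl), if_pos ((hx0 0).mpr rfl), if_pos rfl]
                    ring
                  · rw [if_neg (fun h' => hi ((hx0 i).mp h')),
                      if_neg (fun h' => hi ((hx0 i).mp h'))]
                    simp [hi]
                by_cases hc : b' - ε * ε' * b = 0
                · right; funext i; rw [hval i, hc]; simp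
                · left; left
                  refine ⟨b' - ε * ε' * b, hc, ?_, by funext i; exact hval i⟩
                  rw [abs_le]
                  rcases hε with rfl | rfl <;> rcases hε' with rfl | rfl <;>
                    simp only [one_mul, neg_mul, neg_neg, mul_one, mul_neg] at hb1 hb2 hb1' hb2' ⊢ <;>
                    constructor <;> omega
              · -- untouched E column
                have hlamj : lam j = 0 := by
                  show ε * M t1 j = 0
                  rw [hMij t1, if_neg ht1, if_neg (fun h' : t1 = t' => htt h'.symm)]
                  ring
                obtain ⟨t'', ht''⟩ := Fin.exists_succAbove_eq htt
                have ht''0 : t'' ≠ 0 := by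
                  rintro rfl
                  rw [(hx0 0).mpr rfl] at ht''
                  exact ht' ht''.symm
                left; right; left
                refine ⟨b', ε', t'', ht''0, hε', hb1', hb2', ?_⟩
                funext i
                rw [hMx i, hlamj, zero_mul, sub_zero, hMij]
                congr 1
                · by_cases hi : i = 0
                  · subst hi; rw [if_pos ((hx0 0).mpr rfl), if_pos rfl]
                  · rw [if_neg (fun h' => hi ((hx0 i).mp h')), if_neg hi]
                · rw [← ht'']
                  by_cases hi : i = t''
                  · subst hi; rw [if_pos rfl, if_pos rfl]
                  · rw [if_neg (fun h' => hi (hinj h')), if_neg hi]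
            · -- D column
              have hMij : ∀ i, M i j =
                  (if i = t then 1 else 0) - (if i = s then 1 else 0) := fun i => congrFun hv' i
              by_cases htt1 : t = t1
              · -- becomes E column with sign -1
                rw [htt1] at hMij hts
                have hst : s ≠ t1 := fun h' => hts h'.symm
                have hlamj : lam j = ε := by
                  show ε * M t1 j = ε
                  rw [hMij t1, if_pos rfl, if_neg hts, sub_zero, mul_one]
                obtain ⟨s'', hs''⟩ := Fin.exists_succAbove_eq hst
                have hs''0 : s'' ≠ 0 := by
                  rintro rfl
                  rw [(hx0 0).mpr rfl] at hs''
                  exact hs hs''.symm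
                left; right; left
                refine ⟨-(ε * b), -1, s'', hs''0, Or.inr rfl, ?_, ?_, ?_⟩
                · simpa using hb1
                · simpa using hb2
                · funext i
                  rw [hMx i, hlamj, hMij, hcol]
                  rw [if_neg (hxne i), if_neg (hxne i), ← hs'']
                  have hxs : ∀ i' : Fin (k + 1), (t1.succAbove i' = t1.succAbove s'') ↔ i' = s'' :=
                    fun i' => hinj.eq_iff
                  by_cases hi : i = 0
                  · subst hi
                    rw [if_pos ((hx0 0).mpr rfl), if_neg (fun h' => hs''0 ((hxs 0).mp h').symm),
                      if_pos rfl, if_neg hs''0.symm]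
                    ring
                  · by_cases his : i = s''
                    · subst his
                      rw [if_neg (fun h' => hi ((hx0 i).mp h')), if_pos rfl,
                        if_neg (fun h' => hi h'), if_pos rfl]
                      ring
                    · rw [if_neg (fun h' => hi ((hx0 i).mp h')),
                        if_neg (fun h' => his ((hxs i).mp h')), if_neg hi,
                        if_neg his]
                      ring
              · by_cases hst1 : s = t1
                · -- becomes E column with sign +1
                  rw [hst1] at hMij hts
                  have hlamj : lam j = -ε := by
                    show ε * M t1 j = -ε
                    rw [hMij t1, if_neg (fun h' => htt1 h'.symm), if_pos rfl, zero_sub, mul_neg_one]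
                  obtain ⟨t'', ht''⟩ := Fin.exists_succAbove_eq htt1
                  have ht''0 : t'' ≠ 0 := by
                    rintro rfl
                    rw [(hx0 0).mpr rfl] at ht''
                    exact ht ht''.symm
                  left; right; left
                  refine ⟨ε * b, 1, t'', ht''0, Or.inl rfl, by simpa using hb1,
                    by simpa using hb2, ?_⟩
                  funext i
                  rw [hMx i, hlamj, hMij, hcol]
                  rw [if_neg (hxne i), if_neg (hxne i), ← ht'']
                  have hxs : ∀ i' : Fin (k + 1), (t1.succAbove i' = t1.succAbove t'') ↔ i' = t'' :=
                    fun i' => hinj.eq_iff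
                  by_cases hi : i = 0
                  · subst hi
                    rw [if_pos ((hx0 0).mpr rfl), if_neg (fun h' => ht''0 ((hxs 0).mp h').symm),
                      if_pos rfl, if_neg ht''0.symm]
                    ring
                  · by_cases hit : i = t''
                    · subst hit
                      rw [if_neg (fun h' => hi ((hx0 i).mp h')), if_pos rfl,
                        if_neg (fun h' => hi h'), if_pos rfl]
                      ring
                    · rw [if_neg (fun h' => hi ((hx0 i).mp h')),
                        if_neg (fun h' => hit ((hxs i).mp h')), if_neg hi, if_neg hit]
                      ring
                · -- untouched D column
                  have hlamj : lam j = 0 := by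
                    show ε * M t1 j = 0
                    rw [hMij t1, if_neg (fun h' => htt1 h'.symm), if_neg (fun h' => hst1 h'.symm)]
                    ring
                  obtain ⟨t'', ht''⟩ := Fin.exists_succAbove_eq htt1
                  obtain ⟨s'', hs''⟩ := Fin.exists_succAbove_eq hst1
                  have ht''0 : t'' ≠ 0 := by
                    rintro rfl
                    rw [(hx0 0).mpr rfl] at ht''
                    exact ht ht''.symm
                  have hs''0 : s'' ≠ 0 := by
                    rintro rfl
                    rw [(hx0 0).mpr rfl] at hs''
                    exact hs hs''.symm
                  left; right; right
                  refine ⟨t'', s'', ht''0, hs''0, ?_, ?_⟩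
                  · rintro rfl; exact hts (ht''.symm.trans hs'')
                  · funext i
                    rw [hMx i, hlamj, zero_mul, sub_zero, hMij, ← ht'', ← hs'']
                    congr 1
                    · by_cases hit : i = t''
                      · subst hit; rw [if_pos rfl, if_pos rfl]
                      · rw [if_neg (fun h' => hit (hinj h')), if_neg hit]
                    · by_cases his : i = s''
                      · subst his; rw [if_pos rfl, if_pos rfl]
                      · rw [if_neg (fun h' => his (hinj h')), if_neg his]
          by_cases hz' : ∃ j'' : Fin (k + 1), (fun i => M' (t1.succAbove i) (j1.succAbove j'')) = 0
          · obtain ⟨j'', hj''⟩ := hz'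
            rw [Matrix.det_eq_zero_of_column_eq_zero j'' (fun i => congrFun hj'' i)]
            simp
            omega
          · apply ih
            intro j''
            rcases hclass j'' with h' | h'
            · exact h'
            · exact absurd ⟨j'', h'⟩ hz'
        · intro b _ hb
          rw [hrow b hb, mul_zero, zero_mul]
        · intro h'; exact absurd (Finset.mem_univ _) h'
      · -- no Z, no E: all D columns, first row vanishes
        have h0 : ∀ j, M 0 j = 0 := by
          intro j
          rcases h j with ⟨a, ha0, haΔ, hv⟩ | ⟨b, ε, t, ht, hε, hb1, hb2, hv⟩ |
            ⟨t, s, ht, hs, _, hv⟩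
          · exact absurd ⟨j, a, ha0, haΔ, hv⟩ hZ
          · exact absurd ⟨j, b, ε, t, ht, hε, hb1, hb2, hv⟩ hE
          · have := congrFun hv 0
            rw [this, if_neg (fun h' => ht h'.symm), if_neg (fun h' => hs h'.symm)]
            simp
        rw [Matrix.det_eq_zero_of_row_eq_zero 0 h0]
        simp
        omega

/-- Index type for the columns of the construction. -/
def Idx (Δ m : ℕ) : Type := (Σ j : Fin m, Fin j.val) ⊕ (Fin Δ × Fin m)

instance (Δ m : ℕ) : Fintype (Idx Δ m) := by unfold Idx; infer_instance
instance (Δ m : ℕ) : DecidableEq (Idx Δ m) := by unfold Idx; infer_instance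

/-- The columns of the construction. -/
def colF {Δ m : ℕ} : Idx Δ m → (Fin m → ℤ)
  | .inl ⟨j, i⟩ => fun r =>
      (if (r : ℕ) = (j : ℕ) then 1 else 0) - (if (r : ℕ) = (i : ℕ) then 1 else 0)
  | .inr (a, i) => fun r =>
      (if (r : ℕ) = (i : ℕ) then 1 else 0) + (if (r : ℕ) = 0 then (a : ℤ) else 0)

lemma colF_mcol {Δ k : ℕ} (hΔ : 1 ≤ Δ) (x : Idx Δ (k + 1)) : MCol (Δ : ℤ) (colF x) := by
  obtain ⟨j, i⟩ | ⟨a, i⟩ := x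
  · -- difference column e_j - e_i with i < j
    have hij : (i : ℕ) < (j : ℕ) := i.isLt
    have hj0 : (j : ℕ) ≠ 0 := by omega
    by_cases hi0 : (i : ℕ) = 0
    · -- e_j - e_0 : E-type with b = -1, ε = 1
      right; left
      refine ⟨-1, 1, j, fun h => hj0 (by rw [h]; rfl), Or.inl rfl, by norm_num, by
        have : (1 : ℤ) ≤ (Δ : ℤ) := by exact_mod_cast hΔ
        omega, ?_⟩
      funext r
      show (if (r : ℕ) = (j : ℕ) then (1:ℤ) else 0) - (if (r : ℕ) = (i : ℕ) then 1 else 0) = _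
      rw [hi0]
      by_cases h0 : r = 0 <;> by_cases hj : r = j <;>
        simp_all [Fin.ext_iff, -Fin.val_eq_zero_iff] <;> omega
    · -- D-type
      right; right
      refine ⟨j, ⟨(i : ℕ), by omega⟩, fun h => hj0 (by rw [h]; rfl), fun h => hi0 (by
          have := congrArg Fin.val h; simpa using this), by
          intro h; have := congrArg Fin.val h; simp at this; omega, ?_⟩
      funext r
      show (if (r : ℕ) = (j : ℕ) then (1:ℤ) else 0) - (if (r : ℕ) = (i : ℕ) then 1 else 0) = _
      congr 1 <;> simp [Fin.ext_iff]
  · by_cases hi0 : (i : ℕ) = 0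
    · -- Z-type with a + 1
      left
      refine ⟨(a : ℕ) + 1, by omega, ?_, ?_⟩
      · rw [abs_of_nonneg (by omega)]
        have := a.isLt
        exact_mod_cast by omega
      · funext r
        show (if (r : ℕ) = (i : ℕ) then (1:ℤ) else 0) + (if (r : ℕ) = 0 then (a : ℤ) else 0) = _
        rw [hi0]
        by_cases h0 : r = 0 <;> simp_all [Fin.ext_iff, -Fin.val_eq_zero_iff] <;> ring
    · -- E-type with b = a, ε = 1
      right; left
      refine ⟨(a : ℕ), 1, i, fun h => hi0 (by rw [h]; rfl), Or.inl rfl, by simp, by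
        have := a.isLt
        have : ((a : ℕ) : ℤ) < (Δ : ℤ) := by exact_mod_cast this
        omega, ?_⟩
      funext r
      show (if (r : ℕ) = (i : ℕ) then (1:ℤ) else 0) + (if (r : ℕ) = 0 then (a : ℤ) else 0) = _
      rw [add_comm]
      congr 1 <;> simp [Fin.ext_iff, -Fin.val_eq_zero_iff]

lemma colF_nonneg {Δ m : ℕ} (a : Fin Δ) (i : Fin m) (r : Fin m) :
    0 ≤ colF (Δ := Δ) (.inr (a, i)) r := by
  show (0:ℤ) ≤ (if (r : ℕ) = (i : ℕ) then 1 else 0) + (if (r : ℕ) = 0 then (a : ℤ) else 0)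
  have : (0:ℤ) ≤ (a : ℤ) := by simp
  split_ifs <;> omega

lemma colF_inl_apply {Δ m : ℕ} (j : Fin m) (i : Fin j.val) (r : Fin m) :
    colF (Δ := Δ) (.inl ⟨j, i⟩) r =
      (if (r : ℕ) = (j : ℕ) then 1 else 0) - (if (r : ℕ) = (i : ℕ) then 1 else 0) := rfl

lemma colF_inr_apply {Δ m : ℕ} (a : Fin Δ) (i : Fin m) (r : Fin m) :
    colF (Δ := Δ) (.inr (a, i)) r =
      (if (r : ℕ) = (i : ℕ) then 1 else 0) + (if (r : ℕ) = 0 then (a : ℤ) else 0) := rfl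

lemma colF_ne_zero {Δ m : ℕ} (x : Idx Δ m) : colF x ≠ 0 := by
  obtain ⟨j, i⟩ | ⟨a, i⟩ := x
  · intro h
    have := congrFun h j
    rw [colF_inl_apply] at this
    have hij : (i : ℕ) < (j : ℕ) := i.isLt
    simp only [Pi.zero_apply] at this
    split_ifs at this <;> omega
  · intro h
    have := congrFun h i
    rw [colF_inr_apply] at this
    have : (0:ℤ) ≤ (a : ℤ) := by simp
    simp only [Pi.zero_apply] at *
    split_ifs at * <;> omega

lemma colF_diff {Δ m : ℕ} (x y : Idx Δ m) (hxy : x ≠ y) :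
    colF x ≠ colF y ∧ colF x ≠ (fun r => -(colF y r)) := by
  obtain ⟨j, i⟩ | ⟨a, i⟩ := x <;> obtain ⟨j', i'⟩ | ⟨a', i'⟩ := y
  · -- inl vs inl
    have hij : (i : ℕ) < (j : ℕ) := i.isLt
    have hij' : (i' : ℕ) < (j' : ℕ) := i'.isLt
    constructor
    · intro h
      have h1 := congrFun h j
      have h2 := congrFun h ⟨(i : ℕ), lt_trans i.isLt j.isLt⟩
      simp only [colF_inl_apply] at h1 h2
      have hjj : (j : ℕ) = (j' : ℕ) := by split_ifs at h1 <;> omega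
      have hii : (i : ℕ) = (i' : ℕ) := by split_ifs at h2 <;> omega
      apply hxy
      congr 1
      have : j = j' := Fin.ext hjj
      subst this
      congr 1
      exact Fin.ext hii
    · intro h
      have h1 := congrFun h j
      have h2 := congrFun h ⟨(i : ℕ), lt_trans i.isLt j.isLt⟩
      simp only [colF_inl_apply] at h1 h2
      split_ifs at h1 h2 <;> omega
  · -- inl vs inr
    have hij : (i : ℕ) < (j : ℕ) := i.isLt
    have ha' : (0:ℤ) ≤ (a' : ℤ) := by simp
    constructor
    · intro h
      have h2 := congrFun h ⟨(i : ℕ), lt_trans i.isLt j.isLt⟩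
      simp only [colF_inl_apply, colF_inr_apply] at h2
      split_ifs at h2 <;> omega
    · intro h
      have h1 := congrFun h j
      simp only [colF_inl_apply, colF_inr_apply] at h1
      split_ifs at h1 <;> omega
  · -- inr vs inl
    have hij : (i' : ℕ) < (j' : ℕ) := i'.isLt
    have ha : (0:ℤ) ≤ (a : ℤ) := by simp
    constructor
    · intro h
      have h2 := congrFun h ⟨(i' : ℕ), lt_trans i'.isLt j'.isLt⟩
      simp only [colF_inl_apply, colF_inr_apply] at h2
      split_ifs at h2 <;> omega
    · intro h
      have h1 := congrFun h j'
      simp only [colF_inl_apply, colF_inr_apply] at h1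
      split_ifs at h1 <;> omega
  · -- inr vs inr
    have ha : (0:ℤ) ≤ (a : ℤ) := by simp
    have ha' : (0:ℤ) ≤ (a' : ℤ) := by simp
    constructor
    · intro h
      by_cases hii : (i : ℕ) = (i' : ℕ)
      · have hfin : i = i' := Fin.ext hii
        subst hfin
        have h0 := congrFun h ⟨0, i.pos⟩
        simp only [colF_inr_apply] at h0
        have haa : (a : ℕ) = (a' : ℕ) := by split_ifs at h0 <;> omega
        exact hxy (by rw [show a = a' from Fin.ext haa])
      · have h1 := congrFun h i
        have h2 := congrFun h i'
        simp only [colF_inr_apply] at h1 h2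
        split_ifs at h1 h2 <;> omega
    · intro h
      have h1 := congrFun h i
      simp only [colF_inr_apply] at h1
      split_ifs at h1 <;> omega

lemma card_idx (Δ m : ℕ) (hΔ : 1 ≤ Δ) :
    m ^ 2 + m + 2 * m * (Δ - 1) ≤ 2 * Fintype.card (Idx Δ m) := by
  obtain ⟨d, rfl⟩ : ∃ d, Δ = d + 1 := ⟨Δ - 1, by omega⟩
  have hcard : Fintype.card (Idx (d + 1) m)
      = (∑ j : Fin m, (j : ℕ)) + (d + 1) * m := by
    show Fintype.card ((Σ j : Fin m, Fin j.val) ⊕ (Fin (d+1) × Fin m)) = _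
    rw [Fintype.card_sum, Fintype.card_sigma, Fintype.card_prod]
    simp
  rw [hcard]
  have hs : (∑ j : Fin m, (j : ℕ)) * 2 = m * (m - 1) := by
    rw [Fin.sum_univ_eq_sum_range (fun i => i) m, Finset.sum_range_id_mul_two]
  rcases Nat.eq_zero_or_pos m with rfl | hm
  · simp
  · obtain ⟨l, rfl⟩ : ∃ l, m = l + 1 := ⟨m - 1, by omega⟩
    simp only [Nat.add_sub_cancel] at *
    nlinarith [hs]

theorem stmt3 (Δ m : ℕ) (hΔ : 1 ≤ Δ) (hm : 1 ≤ m) :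
    ∃ (n : ℕ) (A : Matrix (Fin m) (Fin n) ℤ),
      A.rank = m ∧ DiffCols A ∧ DMod A (Δ : ℤ) ∧
      m ^ 2 + m + 2 * m * (Δ - 1) ≤ 2 * n := by
  obtain ⟨k, rfl⟩ : ∃ k, m = k + 1 := ⟨m - 1, by omega⟩
  set N := Fintype.card (Idx Δ (k + 1)) with hN
  set eqv : Fin N ≃ Idx Δ (k + 1) := (Fintype.equivFin (Idx Δ (k + 1))).symm with heqv
  refine ⟨N, Matrix.of fun i jj => colF (eqv jj) i, ?_, ?_, ?_, ?_⟩
  · -- rank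
    apply le_antisymm
    · exact (Matrix.rank_le_card_height _).trans (by simp)
    · -- surjectivity of mulVecLin
      have hsurj : LinearMap.range (Matrix.mulVecLin
          (Matrix.of fun i jj => colF (eqv jj) i)) = ⊤ := by
        rw [← top_le_iff, ← (Pi.basisFun ℤ (Fin (k + 1))).span_eq, Submodule.span_le]
        rintro v ⟨t, rfl⟩
        refine ⟨Pi.single (eqv.symm (.inr (⟨0, hΔ⟩, t))) 1, ?_⟩
        rw [Matrix.mulVecLin_apply]
        funext i
        simp only [Matrix.mulVec, dotProduct, Pi.single_apply, mul_ite, mul_one, mul_zero,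
          Finset.sum_ite_eq', Finset.mem_univ, if_true, Matrix.of_apply, Equiv.apply_symm_apply]
        erw [Equiv.apply_symm_apply, colF_inr_apply]
        simp only [Pi.basisFun_apply, Pi.single_apply]
        by_cases hit : i = t <;> simp [hit, Fin.ext_iff, -Fin.val_eq_zero_iff]
        omega
      rw [Matrix.rank, hsurj, finrank_top]
      simp [Module.finrank_pi]
  · -- differing columns
    constructor
    · intro jj
      exact colF_ne_zero (eqv jj)
    · intro jj jj' hne
      have hx : eqv jj ≠ eqv jj' := fun h => hne (eqv.injective h)
      exact colF_diff (eqv jj) (eqv jj') hx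
  · -- Δ-modularity
    intro g
    apply mcol_det (Δ : ℤ) (by exact_mod_cast hΔ) k
    intro jj
    exact colF_mcol hΔ (eqv (g jj))
  · exact card_idx Δ (k + 1) hΔ
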